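/- Let p > 7 be a prime with binary expansion p = 2^{e_1} + 2^{e_2} + ⋯ + 2^{e_N} + 1, where N ≥ 2 and e_1 > e_2 > ⋯ > e_N > 0, and suppose e_1 − e_2 = 1. Then, as real numbers, (2 + 2·l(p))/2^{2 + l(p)} < (t(p) + 2·l(p) − 1)/p < (1 + l(p))/2^{l(p)}, where l(p) and t(p) are the length and tail of the sequence of lower halves of p. -/

import Mathlib

/-- The lower half of a positive integer: `lh m = ⌊m/2⌋`. -/
def lh (m : ℕ) : ℕ := m / 2

/-- The length of the sequence of lower halves of `n`: the least positive `i`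
such that the `i`-th iterate of `lh` at `n` lies in `{2, 3, 4}`. -/
noncomputable def lhLen (n : ℕ) : ℕ :=
  sInf {i : ℕ | 0 < i ∧ lh^[i] n ∈ ({2, 3, 4} : Set ℕ)}

/-- The tail of the sequence of lower halves of `n`: its last term. -/
noncomputable def lhTail (n : ℕ) : ℕ := lh^[lhLen n] n

lemma lh_iter (n i : ℕ) : lh^[i] n = n / 2 ^ i := by
  induction i with
  | zero => simp
  | succ k ih =>
      rw [Function.iterate_succ_apply', ih, lh, Nat.div_div_eq_div_mul, pow_succ]

lemma sum_pow2 (n : ℕ) : ∑ k ∈ Finset.range n, 2 ^ k = 2 ^ n - 1 := by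
  induction n with
  | zero => simp
  | succ k ih =>
      rw [Finset.sum_range_succ, ih]
      have : 1 ≤ 2 ^ k := Nat.one_le_two_pow
      omega

theorem ratio_bounds_of_gap_one (p N : ℕ) (e : ℕ → ℕ) (hp : p.Prime) (h7 : 7 < p)
    (hN : 2 ≤ N)
    (hanti : ∀ i j : ℕ, i < j → j < N → e j < e i)
    (hpos : ∀ i : ℕ, i < N → 0 < e i)
    (hexp : p = (∑ i ∈ Finset.range N, 2 ^ e i) + 1)
    (hgap : e 0 = e 1 + 1) :
    (2 + 2 * (lhLen p : ℝ)) / 2 ^ (2 + lhLen p)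
        < ((lhTail p : ℝ) + 2 * (lhLen p : ℝ) - 1) / (p : ℝ) ∧
      ((lhTail p : ℝ) + 2 * (lhLen p : ℝ) - 1) / (p : ℝ)
        < (1 + (lhLen p : ℝ)) / 2 ^ (lhLen p) := by
  have he1 : 0 < e 1 := hpos 1 (by omega)
  set L : ℕ := e 0 - 1 with hL
  have hLe1 : L = e 1 := by omega
  have hLpos : 1 ≤ L := by omega
  -- lower bound for p
  have hlow : 3 * 2 ^ L < p := by
    have hsub : Finset.range 2 ⊆ Finset.range N := Finset.range_subset_range.2 hN
    have h2 : ∑ i ∈ Finset.range 2, 2 ^ e i ≤ ∑ i ∈ Finset.range N, 2 ^ e i :=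
      Finset.sum_le_sum_of_subset hsub
    have : ∑ i ∈ Finset.range 2, 2 ^ e i = 3 * 2 ^ L := by
      rw [Finset.sum_range_succ, Finset.sum_range_one, hgap, hLe1, pow_succ]
      ring
    omega
  -- upper bound for p
  have hup : p < 2 ^ (e 0 + 1) := by
    have hinj : Set.InjOn e (Finset.range N) := by
      intro i hi j hj hij
      simp only [Finset.coe_range, Set.mem_Iio] at hi hj
      by_contra hne
      rcases Nat.lt_or_ge i j with h | h
      · have := hanti i j h hj; omega
      · have := hanti j i (by omega) hi; omega
    have himg : ∑ i ∈ Finset.range N, 2 ^ e i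
        = ∑ k ∈ (Finset.range N).image e, 2 ^ k := by
      rw [Finset.sum_image (fun i hi j hj h => hinj hi hj h)]
    have hsubset : (Finset.range N).image e ⊆ Finset.Icc 1 (e 0) := by
      intro k hk
      simp only [Finset.mem_image, Finset.mem_range] at hk
      obtain ⟨i, hi, rfl⟩ := hk
      refine Finset.mem_Icc.2 ⟨hpos i hi, ?_⟩
      rcases Nat.eq_zero_or_pos i with rfl | hi0
      · exact le_refl _
      · exact le_of_lt (hanti 0 i hi0 hi)
    have hbd : ∑ k ∈ (Finset.range N).image e, 2 ^ k
        ≤ ∑ k ∈ Finset.Icc 1 (e 0), 2 ^ k :=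
      Finset.sum_le_sum_of_subset hsubset
    have hIcc : ∑ k ∈ Finset.Icc 1 (e 0), 2 ^ k = 2 ^ (e 0 + 1) - 2 := by
      have h1 : Finset.range (e 0 + 1) = insert 0 (Finset.Icc 1 (e 0)) := by
        ext k
        simp [Finset.mem_range, Finset.mem_Icc]
        omega
      have h2 := sum_pow2 (e 0 + 1)
      rw [h1, Finset.sum_insert (by simp)] at h2
      have : 2 ≤ 2 ^ (e 0 + 1) := by
        calc 2 = 2 ^ 1 := rfl
        _ ≤ 2 ^ (e 0 + 1) := Nat.pow_le_pow_right (by norm_num) (by omega)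
      omega
    omega
  have he0L : e 0 + 1 = L + 2 := by omega
  rw [he0L] at hup
  -- length and tail
  have hdiv : p / 2 ^ L = 3 := by
    have h1 : 3 * 2 ^ L ≤ p := le_of_lt hlow
    have h2 : p < 4 * 2 ^ L := by
      have : 2 ^ (L + 2) = 4 * 2 ^ L := by ring
      omega
    exact Nat.div_eq_of_lt_le h1 h2
  have hmem : L ∈ {i : ℕ | 0 < i ∧ lh^[i] p ∈ ({2, 3, 4} : Set ℕ)} := by
    refine ⟨hLpos, ?_⟩
    rw [lh_iter, hdiv]
    simp
  have hLen : lhLen p = L := by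
    refine le_antisymm (Nat.sInf_le hmem) ?_
    refine le_csInf ⟨L, hmem⟩ ?_
    intro i hi
    obtain ⟨hi0, hi3⟩ := hi
    by_contra hlt
    push_neg at hlt
    have hile : i ≤ L - 1 := by omega
    have h6 : 6 ≤ lh^[i] p := by
      rw [lh_iter]
      rw [Nat.le_div_iff_mul_le (by positivity : 0 < 2 ^ i)]
      have hpow : 2 ^ (i + 1) ≤ 2 ^ L := Nat.pow_le_pow_right (by norm_num) (by omega)
      have heq : 6 * 2 ^ i = 3 * 2 ^ (i + 1) := by rw [pow_succ]; ring
      omega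
    simp only [Set.mem_insert_iff, Set.mem_singleton_iff] at hi3
    omega
  have hTail : lhTail p = 3 := by
    rw [lhTail, hLen, lh_iter, hdiv]
  rw [hLen, hTail]
  push_cast
  -- real arithmetic
  have hT : (1 : ℝ) ≤ 2 ^ L := one_le_pow₀ (by norm_num)
  have hLr : (1 : ℝ) ≤ (L : ℝ) := by exact_mod_cast hLpos
  have hpR : (3 : ℝ) * 2 ^ L < p := by exact_mod_cast hlow
  have hpR2 : (p : ℝ) < 2 ^ (L + 2) := by exact_mod_cast hup
  have hppos : (0 : ℝ) < p := by positivity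
  have hnum : ((3 : ℝ) + 2 * (L : ℝ) - 1) = 2 + 2 * (L : ℝ) := by ring
  constructor
  · rw [hnum]
    have h4 : (2 : ℝ) ^ (2 + L) = 2 ^ (L + 2) := by ring_nf
    rw [h4]
    apply div_lt_div_of_pos_left (by linarith) hppos hpR2
  · rw [hnum, div_lt_div_iff₀ hppos (by positivity)]
    nlinarith [hpR, hT, hLr]
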